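/- arXiv:math/0404042 — 3 statements merged into one kernel-verified Lean document; each statement's English description precedes it below -/
import Mathlib

section
/- For all $x \in [0,1]$ and all real $\lambda \geq 1$, $\frac{1 - x^{\lambda}}{1 + x^{\lambda}} \leq \lambda \cdot \frac{1 - x}{1 + x}$. -/
theorem stmt_9 (x : ℝ) (hx0 : 0 ≤ x) (hx1 : x ≤ 1) (lam : ℝ) (hlam : 1 ≤ lam) :
    (1 - x ^ lam) / (1 + x ^ lam) ≤ lam * ((1 - x) / (1 + x)) := by
  have hlam0 : (0:ℝ) < lam := lt_of_lt_of_le one_pos hlam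
  set f : ℝ → ℝ := fun y => lam * (1 - y) * (1 + y ^ lam) - (1 - y ^ lam) * (1 + y)
    with hf
  -- derivative of f
  have hd : ∀ y : ℝ, HasDerivAt f
      ((lam ^ 2 + lam) * y ^ (lam - 1) - (lam ^ 2 - 1) * y ^ lam - (lam + 1)) y := by
    intro y
    have h1 : HasDerivAt (fun z : ℝ => z ^ lam) (lam * y ^ (lam - 1)) y :=
      Real.hasDerivAt_rpow_const (Or.inr hlam)
    have h2 : HasDerivAt (fun z : ℝ => lam * (1 - z)) (-lam) y := by
      simpa using (((hasDerivAt_id y).const_sub 1).const_mul lam)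
    have h3 : HasDerivAt (fun z : ℝ => 1 + z ^ lam) (lam * y ^ (lam - 1)) y :=
      h1.const_add 1
    have h4 : HasDerivAt (fun z : ℝ => 1 - z ^ lam) (-(lam * y ^ (lam - 1))) y :=
      h1.const_sub 1
    have h5 : HasDerivAt (fun z : ℝ => 1 + z) (1 : ℝ) y := by
      simpa using (hasDerivAt_id y).const_add 1
    have := (h2.mul h3).sub (h4.mul h5)
    refine this.congr_deriv ?_
    have hy : y ^ lam = y ^ (lam - 1) * y := by
      rcases eq_or_ne y 0 with rfl | hy0
      · rw [Real.zero_rpow (by positivity)]; ring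
      · rw [← Real.rpow_add_one hy0]; ring_nf
    rw [hy]; ring
  have hcont : Continuous f := by
    exact Differentiable.continuous (fun y => (hd y).differentiableAt)
  -- f is antitone on [0,1]
  have hmono : AntitoneOn f (Set.Icc 0 1) := by
    apply antitoneOn_of_deriv_nonpos (convex_Icc 0 1) hcont.continuousOn
    · intro y hy
      exact (hd y).differentiableAt.differentiableWithinAt
    · intro y hy
      rw [interior_Icc] at hy
      obtain ⟨hy0, hy1⟩ := hy
      rw [(hd y).deriv]
      -- AM-GM: y^(lam-1) * (lam - (lam-1)*y) ≤ 1
      have hp2 : (0:ℝ) ≤ lam - (lam - 1) * y := by nlinarith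
      have hAM := Real.geom_mean_le_arith_mean2_weighted
        (w₁ := (lam - 1) / lam) (w₂ := 1 / lam) (p₁ := y) (p₂ := lam - (lam - 1) * y)
        (div_nonneg (by linarith) hlam0.le) (by positivity) hy0.le hp2 (by field_simp; ring)
      have harith : (lam - 1) / lam * y + 1 / lam * (lam - (lam - 1) * y) = 1 := by
        field_simp; ring
      rw [harith] at hAM
      have hkey : y ^ (lam - 1) * (lam - (lam - 1) * y) ≤ 1 := by
        have h1 : (y ^ ((lam - 1) / lam) * (lam - (lam - 1) * y) ^ (1 / lam)) ^ lam ≤ 1 :=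
          Real.rpow_le_one (by positivity) hAM hlam0.le
        rw [Real.mul_rpow (by positivity) (by positivity),
          ← Real.rpow_mul hy0.le, ← Real.rpow_mul hp2,
          div_mul_cancel₀ _ hlam0.ne', one_div, inv_mul_cancel₀ hlam0.ne',
          Real.rpow_one] at h1
        exact h1
      have hy2 : y ^ lam = y ^ (lam - 1) * y := by
        rw [← Real.rpow_add_one hy0.ne']; ring_nf
      rw [hy2]
      nlinarith [Real.rpow_nonneg hy0.le (lam - 1)]
  have hx01 : x ∈ Set.Icc (0:ℝ) 1 := ⟨hx0, hx1⟩
  have h1m : (1:ℝ) ∈ Set.Icc (0:ℝ) 1 := ⟨zero_le_one, le_refl 1⟩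
  have hf1 : f 1 = 0 := by simp [hf, Real.one_rpow]
  have hfx : 0 ≤ f x := by
    have := hmono hx01 h1m hx1
    rw [hf1] at this
    exact this
  have hxl0 : (0:ℝ) ≤ x ^ lam := Real.rpow_nonneg hx0 lam
  have hden1 : (0:ℝ) < 1 + x ^ lam := by linarith
  have hden2 : (0:ℝ) < 1 + x := by linarith
  rw [mul_div_assoc' lam, div_le_div_iff₀ hden1 hden2]
  simp only [hf] at hfx
  nlinarith
end

section
/- Let $\unlhd$ be a partial order on $\mathbb{R}^n$ such that for every $w$ the set $\{z : z \unlhd w\}$ is convex, let $\mu$ be a probability measure supported on a bounded subset of $\mathbb{R}^n$ that is totally ordered by $\unlhd$, and let $h : \mathbb{R}^n \to \mathbb{R}$ be continuous and convex along every segment connecting two comparable points. Then $h(\int x\, d\mu(x)) \leq \int h(x)\, d\mu(x)$. -/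
open MeasureTheory Filter Topology

private lemma exists_top_of_chain {α : Type*} (r : α → α → Prop)
    (hrefl : ∀ z, r z z) (htrans : ∀ z w v, r z w → r w v → r z v)
    {s : Set α} (hchain : ∀ z ∈ s, ∀ w ∈ s, r z w ∨ r w z) :
    ∀ (t : Finset α), (∀ y ∈ t, y ∈ s) → t.Nonempty → ∃ m ∈ t, ∀ y ∈ t, r y m := by
  classical
  intro t
  induction t using Finset.induction_on with
  | empty => intro _ hne; exact absurd hne (by simp)
  | insert a t hat ih =>
    intro hts _
    have has : a ∈ s := hts a (Finset.mem_insert_self a t)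
    rcases t.eq_empty_or_nonempty with rfl | hne
    · refine ⟨a, Finset.mem_insert_self a _, ?_⟩
      intro y hy
      rcases Finset.mem_insert.1 hy with rfl | hy
      · exact hrefl _
      · simp at hy
    · obtain ⟨m, hmt, htop⟩ := ih (fun y hy => hts y (Finset.mem_insert_of_mem hy)) hne
      have hms : m ∈ s := hts m (Finset.mem_insert_of_mem hmt)
      rcases hchain a has m hms with hcmp | hcmp
      · refine ⟨m, Finset.mem_insert_of_mem hmt, ?_⟩
        intro y hy
        rcases Finset.mem_insert.1 hy with rfl | hy
        · exact hcmp
        · exact htop y hy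
      · refine ⟨a, Finset.mem_insert_self a t, ?_⟩
        intro y hy
        rcases Finset.mem_insert.1 hy with rfl | hy
        · exact hrefl _
        · exact htrans y m a (htop y hy) hcmp

private lemma jensen_finset {n : ℕ} (r : (Fin n → ℝ) → (Fin n → ℝ) → Prop)
    (hrefl : ∀ z, r z z) (htrans : ∀ z w v, r z w → r w v → r z v)
    (hlower : ∀ w, Convex ℝ {z | r z w})
    {s : Set (Fin n → ℝ)}
    (hchain : ∀ z ∈ s, ∀ w ∈ s, r z w ∨ r w z)
    (h : (Fin n → ℝ) → ℝ)
    (hconv : ∀ z w, r z w → ConvexOn ℝ (segment ℝ z w) h) :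
    ∀ (t : Finset (Fin n → ℝ)), (∀ y ∈ t, y ∈ s) → ∀ (w : (Fin n → ℝ) → ℝ),
      (∀ y ∈ t, 0 ≤ w y) → (∑ y ∈ t, w y) = 1 →
      h (∑ y ∈ t, w y • y) ≤ ∑ y ∈ t, w y * h y := by
  classical
  intro t
  induction t using Finset.strongInduction with
  | _ t ih =>
    intro hts w hw0 hw1
    have htne : t.Nonempty := by
      rcases t.eq_empty_or_nonempty with rfl | hne
      · simp at hw1
      · exact hne
    obtain ⟨m, hmt, htop⟩ := exists_top_of_chain r hrefl htrans hchain t hts htne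
    set t' := t.erase m with ht'
    have hsub : t' ⊂ t := Finset.erase_ssubset hmt
    set c : ℝ := ∑ y ∈ t', w y with hc
    have hc0 : 0 ≤ c := Finset.sum_nonneg fun y hy => hw0 y (Finset.mem_of_mem_erase hy)
    have hcm : w m + c = 1 := by rw [hc, ht', Finset.add_sum_erase t w hmt]; exact hw1
    have hsplit : ∑ y ∈ t, w y • y = w m • m + ∑ y ∈ t', w y • y :=
      (Finset.add_sum_erase t (fun y => w y • y) hmt).symm
    have hsplit' : ∑ y ∈ t, w y * h y = w m * h m + ∑ y ∈ t', w y * h y :=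
      (Finset.add_sum_erase t (fun y => w y * h y) hmt).symm
    rcases eq_or_lt_of_le hc0 with hceq | hcpos
    · have hz : ∀ y ∈ t', w y = 0 := by
        intro y hy
        have := (Finset.sum_eq_zero_iff_of_nonneg
          (fun y hy => hw0 y (Finset.mem_of_mem_erase hy))).1 hceq.symm
        exact this y hy
      have hwm : w m = 1 := by rw [← hcm, ← hceq]; ring
      have h1 : ∑ y ∈ t, w y • y = m := by
        rw [hsplit, Finset.sum_eq_zero (fun y hy => by rw [hz y hy, zero_smul]), hwm]
        simp
      have h2 : ∑ y ∈ t, w y * h y = h m := by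
        rw [hsplit', Finset.sum_eq_zero (fun y hy => by rw [hz y hy, zero_mul]), hwm]
        ring
      rw [h1, h2]
    · -- c > 0
      have hcne : c ≠ 0 := ne_of_gt hcpos
      set b' : Fin n → ℝ := c⁻¹ • ∑ y ∈ t', w y • y with hb'
      have hb'sum : ∑ y ∈ t', (w y / c) • y = b' := by
        rw [hb', Finset.smul_sum]
        refine Finset.sum_congr rfl fun y hy => ?_
        rw [smul_smul, div_eq_inv_mul]
      have hIH : h b' ≤ ∑ y ∈ t', (w y / c) * h y := by
        have := ih t' hsub (fun y hy => hts y (Finset.mem_of_mem_erase hy))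
          (fun y => w y / c)
          (fun y hy => div_nonneg (hw0 y (Finset.mem_of_mem_erase hy)) hc0)
          (by rw [← Finset.sum_div, ← hc, div_self hcne])
        rwa [hb'sum] at this
      have hb'm : r b' m := by
        have hmem : t'.centerMass w id ∈ convexHull ℝ {z | r z m} :=
          t'.centerMass_mem_convexHull
            (fun y hy => hw0 y (Finset.mem_of_mem_erase hy))
            (by rw [← hc]; exact hcpos)
            (fun y hy => htop y (Finset.mem_of_mem_erase hy))
        rw [(hlower m).convexHull_eq] at hmem
        have : t'.centerMass w id = b' := by
          rw [Finset.centerMass, ← hc, hb']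
          rfl
        rwa [this] at hmem
      have hseg : h (c • b' + w m • m) ≤ c * h b' + w m * h m := by
        have hwm0 : 0 ≤ w m := hw0 m hmt
        have := (hconv b' m hb'm).2 (left_mem_segment ℝ b' m) (right_mem_segment ℝ b' m)
          hc0 hwm0 (by linarith)
        simpa using this
      have hcb' : c • b' = ∑ y ∈ t', w y • y := by
        rw [hb', smul_inv_smul₀ hcne]
      have hfin : c * h b' ≤ ∑ y ∈ t', w y * h y := by
        calc c * h b' ≤ c * ∑ y ∈ t', (w y / c) * h y :=
              mul_le_mul_of_nonneg_left hIH hc0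
          _ = ∑ y ∈ t', w y * h y := by
              rw [Finset.mul_sum]
              refine Finset.sum_congr rfl fun y hy => ?_
              field_simp
      calc h (∑ y ∈ t, w y • y) = h (c • b' + w m • m) := by
            rw [hsplit, hcb', add_comm]
        _ ≤ c * h b' + w m * h m := hseg
        _ ≤ (∑ y ∈ t', w y * h y) + w m * h m := by linarith
        _ = ∑ y ∈ t, w y * h y := by rw [hsplit']; ring

/-- A generalized Jensen inequality: if `h` is continuous and convex along every
segment joining two points comparable in a partial order `r` with convex lower
sets, and `μ` is a probability measure supported on a bounded `r`-chain, then
`h(∫ x dμ) ≤ ∫ h dμ`. -/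
theorem stmt_14 {n : ℕ}
    (r : (Fin n → ℝ) → (Fin n → ℝ) → Prop)
    (hrefl : ∀ z, r z z)
    (hantisymm : ∀ z w, r z w → r w z → z = w)
    (htrans : ∀ z w v, r z w → r w v → r z v)
    (hlower : ∀ w, Convex ℝ {z | r z w})
    (μ : Measure (Fin n → ℝ)) [IsProbabilityMeasure μ]
    (s : Set (Fin n → ℝ)) (hbdd : Bornology.IsBounded s) (hμs : μ s = 1)
    (hchain : ∀ z ∈ s, ∀ w ∈ s, r z w ∨ r w z)
    (h : (Fin n → ℝ) → ℝ) (hcont : Continuous h)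
    (hconv : ∀ z w, r z w → ConvexOn ℝ (segment ℝ z w) h) :
    h (∫ x, x ∂μ) ≤ ∫ x, h x ∂μ := by
  classical
  have hsne : s.Nonempty := by
    rcases s.eq_empty_or_nonempty with rfl | hne
    · simp at hμs
    · exact hne
  obtain ⟨y₀, hy₀⟩ := hsne
  set K := closure s with hKdef
  have hKc : IsCompact K := Metric.isCompact_of_isClosed_isBounded isClosed_closure hbdd.closure
  have hsK : s ⊆ K := subset_closure
  obtain ⟨R, hR⟩ : ∃ R, ∀ x ∈ K, ‖x‖ ≤ R :=
    hKc.exists_bound_of_continuousOn continuousOn_id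
  obtain ⟨C, hC⟩ : ∃ C, ∀ x ∈ K, ‖h x‖ ≤ C :=
    hKc.exists_bound_of_continuousOn hcont.continuousOn
  have hK1 : μ K = 1 := le_antisymm prob_le_one (hμs ▸ measure_mono hsK)
  have haeK : ∀ᵐ x ∂μ, x ∈ K := by
    rw [ae_iff]
    have : {x | ¬ x ∈ K} = Kᶜ := rfl
    rw [this, measure_compl isClosed_closure.measurableSet (measure_ne_top μ K), hK1,
      measure_univ, tsub_self]
  set φ : ℕ → SimpleFunc (Fin n → ℝ) (Fin n → ℝ) :=
    fun N => SimpleFunc.approxOn id measurable_id s y₀ hy₀ N with hφdef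
  have hφmem : ∀ N x, φ N x ∈ s := fun N x => SimpleFunc.approxOn_mem measurable_id hy₀ N x
  have hφnorm : ∀ N x, ‖φ N x‖ ≤ R := fun N x => hR _ (hsK (hφmem N x))
  have hφh : ∀ N x, ‖h (φ N x)‖ ≤ C := fun N x => hC _ (hsK (hφmem N x))
  have hφtendsto : ∀ x ∈ K, Tendsto (fun N => φ N x) atTop (𝓝 x) := fun x hx =>
    SimpleFunc.tendsto_approxOn measurable_id hy₀ (by simpa using hx)
  have hφint : ∀ N, Integrable (φ N) μ := fun N =>
    Integrable.mono' (integrable_const R) ((φ N).stronglyMeasurable.aestronglyMeasurable)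
      (Filter.Eventually.of_forall (hφnorm N))
  have hhφint : ∀ N, Integrable (fun x => h (φ N x)) μ := fun N =>
    Integrable.mono' (integrable_const C)
      (hcont.comp_aestronglyMeasurable ((φ N).stronglyMeasurable.aestronglyMeasurable))
      (Filter.Eventually.of_forall (hφh N))
  -- per-N Jensen inequality
  have key : ∀ N, h (∫ x, φ N x ∂μ) ≤ ∫ x, h (φ N x) ∂μ := by
    intro N
    set ψ := φ N with hψ
    set W : (Fin n → ℝ) → ℝ := fun y => (μ (ψ ⁻¹' {y})).toReal with hW
    have hWsum : ∑ y ∈ ψ.range, W y = 1 := by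
      have h1 : ∑ y ∈ ψ.range, μ (ψ ⁻¹' {y}) = μ Set.univ :=
        ψ.sum_range_measure_preimage_singleton μ
      have h2 : (∑ y ∈ ψ.range, μ (ψ ⁻¹' {y})).toReal = ∑ y ∈ ψ.range, W y :=
        ENNReal.toReal_sum fun y _ => measure_ne_top μ _
      rw [← h2, h1, measure_univ, ENNReal.toReal_one]
    have hW0 : ∀ y ∈ ψ.range, 0 ≤ W y := fun y _ => ENNReal.toReal_nonneg
    have hWmem : ∀ y ∈ ψ.range, y ∈ s := by
      intro y hy
      obtain ⟨x, rfl⟩ := SimpleFunc.mem_range.1 hy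
      exact hφmem N x
    have e1 : ∫ x, ψ x ∂μ = ∑ y ∈ ψ.range, W y • y := by
      rw [← SimpleFunc.integral_eq_integral ψ (hφint N), SimpleFunc.integral_eq]; rfl
    have e2 : ∫ x, h (ψ x) ∂μ = ∑ y ∈ ψ.range, W y * h y := by
      set g : (Fin n → ℝ) → ℝ := fun y => h y - h 0 with hg
      have hg0 : g 0 = 0 := sub_self _
      have hgint : Integrable (fun x => g (ψ x)) μ := (hhφint N).sub (integrable_const (h 0))
      have hmapint : Integrable (ψ.map g) μ := by
        have : (fun x => g (ψ x)) = ⇑(ψ.map g) := by ext x; simp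
        rwa [this] at hgint
      have hmap : (ψ.map g).integral μ = ∑ y ∈ ψ.range, W y • g y :=
        SimpleFunc.map_integral ψ g (hφint N) hg0
      have hmap' : ∫ x, g (ψ x) ∂μ = ∑ y ∈ ψ.range, W y • g y := by
        rw [← hmap, SimpleFunc.integral_eq_integral (ψ.map g) hmapint]
        exact integral_congr_ae (Filter.Eventually.of_forall fun x => by simp)
      have hgsub : ∫ x, g (ψ x) ∂μ = (∫ x, h (ψ x) ∂μ) - h 0 := by
        rw [hg]
        rw [integral_sub (hhφint N) (integrable_const (h 0)), integral_const, Measure.real, measure_univ,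
          ENNReal.toReal_one, one_smul]
      have hsum : ∑ y ∈ ψ.range, W y • g y = (∑ y ∈ ψ.range, W y * h y) - h 0 := by
        rw [hg]
        have : ∀ y ∈ ψ.range, W y • (h y - h 0) = W y * h y - W y * h 0 := by
          intro y _; simp [smul_eq_mul]; ring
        rw [Finset.sum_congr rfl this, Finset.sum_sub_distrib, ← Finset.sum_mul, hWsum, one_mul]
      have := hmap'.trans hsum
      rw [hgsub] at this
      linarith
    rw [e1, e2]
    exact jensen_finset r hrefl htrans hlower hchain h hconv ψ.range hWmem W hW0 hWsum
  -- limits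
  have lim1 : Tendsto (fun N => ∫ x, φ N x ∂μ) atTop (𝓝 (∫ x, x ∂μ)) := by
    refine tendsto_integral_of_dominated_convergence (fun _ => R)
      (fun N => (φ N).stronglyMeasurable.aestronglyMeasurable)
      (integrable_const R)
      (fun N => Filter.Eventually.of_forall (hφnorm N)) ?_
    filter_upwards [haeK] with x hx using hφtendsto x hx
  have lim2 : Tendsto (fun N => ∫ x, h (φ N x) ∂μ) atTop (𝓝 (∫ x, h x ∂μ)) := by
    refine tendsto_integral_of_dominated_convergence (fun _ => C)
      (fun N => hcont.comp_aestronglyMeasurable ((φ N).stronglyMeasurable.aestronglyMeasurable))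
      (integrable_const C)
      (fun N => Filter.Eventually.of_forall (hφh N)) ?_
    filter_upwards [haeK] with x hx
    exact (hcont.tendsto x).comp (hφtendsto x hx)
  have lim1' : Tendsto (fun N => h (∫ x, φ N x ∂μ)) atTop (𝓝 (h (∫ x, x ∂μ))) :=
    (hcont.tendsto _).comp lim1
  exact le_of_tendsto_of_tendsto' lim1' lim2 key
end

section
/- Let $\Gamma$ be a spherically symmetric tree of finite height $n$ and define $h_\Gamma(z_1,\ldots,z_n)$ for $1 \geq z_1 \geq \cdots \geq z_n \geq 0$ recursively by $h_\Gamma(z_1) = (1-z_1)^{|\Gamma_1|}$ and $h_\Gamma(z_1,\ldots,z_n) = [(1-z_1) + z_1 h_{\Gamma(\sigma)}(z_2/z_1,\ldots,z_n/z_1)]^{|\Gamma_1|}$ where $\Gamma(\sigma)$ is the subtree rooted at any first-level vertex. Then $h_\Gamma$ is a convex function on its domain. -/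
/-- The probability that no ray of a spherically symmetric tree of height `n` with
branching numbers `f 0, …, f (n-1)` survives the Bernoulli percolation in which a
level-`(k+1)` vertex is connected to the root with probability `z k`. -/
noncomputable def hG : ℕ → (ℕ → ℕ) → (ℕ → ℝ) → ℝ
  | 0, _, _ => 0
  | n + 1, f, z =>
      ((1 - z 0) + z 0 * hG n (fun k => f (k + 1)) (fun k => z (k + 1) / z 0)) ^ (f 0)

/-- `hG n f z` only depends on `z 0, …, z (n-1)`. -/
lemma hG_congr : ∀ (n : ℕ) (f : ℕ → ℕ) (z w : ℕ → ℝ),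
    (∀ k, k < n → z k = w k) → hG n f z = hG n f w
  | 0, _, _, _, _ => rfl
  | n + 1, f, z, w, h => by
      have h0 : z 0 = w 0 := h 0 (Nat.succ_pos n)
      simp only [hG, h0]
      rw [hG_congr n (fun k => f (k + 1)) (fun k => z (k + 1) / w 0)
        (fun k => w (k + 1) / w 0) (fun k hk => by
          show z (k + 1) / w 0 = w (k + 1) / w 0
          rw [h (k + 1) (by omega)])]

/-- `z j ≤ z 0` along the chain. -/
lemma chain_le {n : ℕ} {z : ℕ → ℝ} (h : ∀ k, k + 1 < n → z (k + 1) ≤ z k) :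
    ∀ j, j < n → z j ≤ z 0 := by
  intro j
  induction j with
  | zero => exact fun _ => le_refl _
  | succ j ih => intro hj; exact (h j hj).trans (ih (by omega))

/-- The shifted-and-rescaled point stays in the domain. -/
lemma shift_mem {n : ℕ} {z : ℕ → ℝ}
    (h1 : 0 < n + 1 → z 0 ≤ 1) (h2 : ∀ k, k < n + 1 → 0 ≤ z k)
    (h3 : ∀ k, k + 1 < n + 1 → z (k + 1) ≤ z k) :
    (0 < n → z 1 / z 0 ≤ 1) ∧ (∀ k, k < n → 0 ≤ z (k + 1) / z 0) ∧
      (∀ k, k + 1 < n → z (k + 2) / z 0 ≤ z (k + 1) / z 0) := by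
  rcases (h2 0 (by omega)).eq_or_lt with h0 | h0
  · refine ⟨fun _ => ?_, fun k hk => ?_, fun k hk => ?_⟩ <;> simp [← h0]
  · refine ⟨fun hn => (div_le_one h0).2 (h3 0 (by omega)),
      fun k hk => div_nonneg (h2 (k + 1) (by omega)) h0.le,
      fun k hk => div_le_div_of_nonneg_right (h3 (k + 1) (by omega)) h0.le⟩

/-- `hG` takes values in `[0,1]` on the domain. -/
lemma hG_mem : ∀ (n : ℕ) (f : ℕ → ℕ) (z : ℕ → ℝ),
    (0 < n → z 0 ≤ 1) → (∀ k, k < n → 0 ≤ z k) →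
    (∀ k, k + 1 < n → z (k + 1) ≤ z k) →
    hG n f z ∈ Set.Icc (0 : ℝ) 1
  | 0, _, _, _, _, _ => by simp [hG]
  | n + 1, f, z, h1, h2, h3 => by
      obtain ⟨s1, s2, s3⟩ := shift_mem h1 h2 h3
      have ht := hG_mem n (fun k => f (k + 1)) (fun k => z (k + 1) / z 0) s1 s2 s3
      have hz0 : 0 ≤ z 0 := h2 0 (by omega)
      have hz1 : z 0 ≤ 1 := h1 (by omega)
      have hb0 : 0 ≤ (1 - z 0) + z 0 * hG n (fun k => f (k + 1)) (fun k => z (k + 1) / z 0) := by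
        have := mul_nonneg hz0 ht.1; linarith
      have hb1 : (1 - z 0) + z 0 * hG n (fun k => f (k + 1)) (fun k => z (k + 1) / z 0) ≤ 1 := by
        have := mul_le_mul_of_nonneg_left ht.2 hz0; linarith
      exact ⟨pow_nonneg hb0 _, pow_le_one₀ hb0 hb1⟩

lemma domain_convex (n : ℕ) :
    Convex ℝ {z : ℕ → ℝ | (0 < n → z 0 ≤ 1) ∧ (∀ k, k < n → 0 ≤ z k) ∧
      ∀ k, k + 1 < n → z (k + 1) ≤ z k} := by
  intro x hx y hy a b ha hb hab
  obtain ⟨hx1, hx2, hx3⟩ := hx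
  obtain ⟨hy1, hy2, hy3⟩ := hy
  refine ⟨fun hn => ?_, fun k hk => ?_, fun k hk => ?_⟩
  · have := hx1 hn; have := hy1 hn
    simp only [Pi.add_apply, Pi.smul_apply, smul_eq_mul]
    nlinarith
  · simp only [Pi.add_apply, Pi.smul_apply, smul_eq_mul]
    exact add_nonneg (mul_nonneg ha (hx2 k hk)) (mul_nonneg hb (hy2 k hk))
  · simp only [Pi.add_apply, Pi.smul_apply, smul_eq_mul]
    exact add_le_add (mul_le_mul_of_nonneg_left (hx3 k hk) ha)
      (mul_le_mul_of_nonneg_left (hy3 k hk) hb)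

lemma hG_convexOn (n : ℕ) (f : ℕ → ℕ) (hf : ∀ k, 1 ≤ f k) :
    ConvexOn ℝ {z : ℕ → ℝ | (0 < n → z 0 ≤ 1) ∧ (∀ k, k < n → 0 ≤ z k) ∧
      ∀ k, k + 1 < n → z (k + 1) ≤ z k} (hG n f) := by
  induction n generalizing f with
  | zero =>
      have : hG 0 f = fun _ => (0 : ℝ) := rfl
      rw [this]
      exact convexOn_const 0 (domain_convex 0)
  | succ n ih =>
      set S := {z : ℕ → ℝ | (0 < n + 1 → z 0 ≤ 1) ∧ (∀ k, k < n + 1 → 0 ≤ z k) ∧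
        ∀ k, k + 1 < n + 1 → z (k + 1) ≤ z k} with hS
      set f' := fun k => f (k + 1) with hf'
      set φ : (ℕ → ℝ) → ℝ := fun z => (1 - z 0) + z 0 * hG n f' (fun k => z (k + 1) / z 0)
        with hφ
      -- membership of shifted points
      have hshift : ∀ z ∈ S, (fun k => z (k + 1) / z 0) ∈
          {w : ℕ → ℝ | (0 < n → w 0 ≤ 1) ∧ (∀ k, k < n → 0 ≤ w k) ∧
            ∀ k, k + 1 < n → w (k + 1) ≤ w k} := by
        intro z hz
        obtain ⟨s1, s2, s3⟩ := shift_mem hz.1 hz.2.1 hz.2.2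
        exact ⟨s1, s2, s3⟩
      -- φ takes values in [0,1]
      have hφmem : ∀ z ∈ S, φ z ∈ Set.Icc (0 : ℝ) 1 := by
        intro z hz
        obtain ⟨s1, s2, s3⟩ := hshift z hz
        have ht := hG_mem n f' (fun k => z (k + 1) / z 0) s1 s2 s3
        have hz0 : 0 ≤ z 0 := hz.2.1 0 (by omega)
        have hz1 : z 0 ≤ 1 := hz.1 (by omega)
        constructor
        · have := mul_nonneg hz0 ht.1; simp only [hφ]; linarith
        · have := mul_le_mul_of_nonneg_left ht.2 hz0; simp only [hφ]; linarith
      -- φ is convex on S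
      have hφconv : ∀ x ∈ S, ∀ y ∈ S, ∀ a b : ℝ, 0 ≤ a → 0 ≤ b → a + b = 1 →
          φ (a • x + b • y) ≤ a * φ x + b * φ y := by
        intro x hx y hy a b ha hb hab
        rcases ha.eq_or_lt with rfl | ha'
        · have hb1 : b = 1 := by linarith
          have : (0 : ℝ) • x + b • y = y := by
            funext k; simp [hb1]
          rw [this, hb1]; simp
        rcases hb.eq_or_lt with rfl | hb'
        · have ha1 : a = 1 := by linarith
          have : a • x + (0 : ℝ) • y = x := by
            funext k; simp [ha1]
          rw [this, ha1]; simp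
        have hx0 : 0 ≤ x 0 := hx.2.1 0 (by omega)
        have hy0 : 0 ≤ y 0 := hy.2.1 0 (by omega)
        have hw0 : (a • x + b • y) 0 = a * x 0 + b * y 0 := by
          simp [smul_eq_mul]
        -- key case analysis on positivity of x 0, y 0
        rcases hx0.eq_or_lt with hx0' | hx0' <;> rcases hy0.eq_or_lt with hy0' | hy0'
        · -- both zero
          have ew : φ (a • x + b • y) = 1 := by
            simp only [hφ, hw0, ← hx0', ← hy0']; ring
          have e1 : φ x = 1 := by simp only [hφ, ← hx0']; ring
          have e2 : φ y = 1 := by simp only [hφ, ← hy0']; ring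
          rw [ew, e1, e2]; linarith
        · -- x 0 = 0, y 0 > 0
          have hxall : ∀ k, k < n + 1 → x k = 0 := fun k hk =>
            le_antisymm (by simpa [← hx0'] using chain_le hx.2.2 k hk) (hx.2.1 k hk)
          have hcong : hG n f' (fun k => (a • x + b • y) (k + 1) / (a • x + b • y) 0)
              = hG n f' (fun k => y (k + 1) / y 0) := by
            apply hG_congr
            intro k hk
            have hxk : x (k + 1) = 0 := hxall (k + 1) (by omega)
            simp only [Pi.add_apply, Pi.smul_apply, smul_eq_mul, hxk, ← hx0',
              mul_zero, zero_add, add_zero]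
            rw [mul_div_mul_left _ _ (ne_of_gt hb')]
          set H := hG n f' (fun k => y (k + 1) / y 0) with hH
          have ew : φ (a • x + b • y) = 1 - b * y 0 + b * y 0 * H := by
            simp only [hφ]
            rw [hcong, hw0, ← hx0']
            ring
          have ex : φ x = 1 := by simp only [hφ, ← hx0']; ring
          have ey : φ y = 1 - y 0 + y 0 * H := by simp only [hφ, ← hH]
          rw [ew, ex, ey]
          have : b * (1 - y 0 + y 0 * H) = b - b * y 0 + b * y 0 * H := by ring
          nlinarith [this]
        · -- y 0 = 0, x 0 > 0
          have hyall : ∀ k, k < n + 1 → y k = 0 := fun k hk =>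
            le_antisymm (by simpa [← hy0'] using chain_le hy.2.2 k hk) (hy.2.1 k hk)
          have hcong : hG n f' (fun k => (a • x + b • y) (k + 1) / (a • x + b • y) 0)
              = hG n f' (fun k => x (k + 1) / x 0) := by
            apply hG_congr
            intro k hk
            have hyk : y (k + 1) = 0 := hyall (k + 1) (by omega)
            simp only [Pi.add_apply, Pi.smul_apply, smul_eq_mul, hyk, ← hy0',
              mul_zero, zero_add, add_zero]
            rw [mul_div_mul_left _ _ (ne_of_gt ha')]
          set H := hG n f' (fun k => x (k + 1) / x 0) with hH
          have ew : φ (a • x + b • y) = 1 - a * x 0 + a * x 0 * H := by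
            simp only [hφ]
            rw [hcong, hw0, ← hy0']
            ring
          have ey : φ y = 1 := by simp only [hφ, ← hy0']; ring
          have ex : φ x = 1 - x 0 + x 0 * H := by simp only [hφ, ← hH]
          rw [ew, ex, ey]
          have : a * (1 - x 0 + x 0 * H) = a - a * x 0 + a * x 0 * H := by ring
          nlinarith [this]
        · -- both positive: perspective argument
          have hw0' : (0:ℝ) < a * x 0 + b * y 0 := by positivity
          set w0 : ℝ := a * x 0 + b * y 0 with hw0def
          set u : ℕ → ℝ := fun k => x (k + 1) / x 0 with hu
          set v : ℕ → ℝ := fun k => y (k + 1) / y 0 with hv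
          set c : ℝ := a * x 0 / w0 with hc
          set d : ℝ := b * y 0 / w0 with hd
          have hcd : c + d = 1 := by
            rw [hc, hd, ← add_div, ← hw0def]; exact div_self hw0'.ne'
          have hc0 : 0 ≤ c := by positivity
          have hd0 : 0 ≤ d := by positivity
          have hkey : (fun k => (a • x + b • y) (k + 1) / (a • x + b • y) 0) = c • u + d • v := by
            funext k
            simp only [Pi.add_apply, Pi.smul_apply, smul_eq_mul, hu, hv, hc, hd, hw0def]
            field_simp
          have hiu := hshift x hx
          have hiv := hshift y hy
          have hIH := (ih f' (fun k => hf (k + 1))).2 hiu hiv hc0 hd0 hcd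
          simp only [smul_eq_mul] at hIH
          have hmul : w0 * hG n f' (c • u + d • v) ≤ w0 * (c * hG n f' u + d * hG n f' v) :=
            mul_le_mul_of_nonneg_left hIH hw0'.le
          have hwc : w0 * c = a * x 0 := by
            rw [hc]; field_simp
          have hwd : w0 * d = b * y 0 := by
            rw [hd]; field_simp
          have hmul' : w0 * hG n f' (c • u + d • v) ≤
              a * x 0 * hG n f' u + b * y 0 * hG n f' v := by
            calc w0 * hG n f' (c • u + d • v) ≤ w0 * (c * hG n f' u + d * hG n f' v) := hmul
              _ = (w0 * c) * hG n f' u + (w0 * d) * hG n f' v := by ring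
              _ = a * x 0 * hG n f' u + b * y 0 * hG n f' v := by rw [hwc, hwd]
          have ew : φ (a • x + b • y) = 1 - w0 + w0 * hG n f' (c • u + d • v) := by
            simp only [hφ]
            rw [hkey, hw0]
          have ex : φ x = 1 - x 0 + x 0 * hG n f' u := by simp only [hφ, ← hu]
          have ey : φ y = 1 - y 0 + y 0 * hG n f' v := by simp only [hφ, ← hv]
          rw [ew, ex, ey]
          have hexp : a * (1 - x 0 + x 0 * hG n f' u) + b * (1 - y 0 + y 0 * hG n f' v)
              = a + b - (a * x 0 + b * y 0) + (a * x 0 * hG n f' u + b * y 0 * hG n f' v) := by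
            ring
          rw [hexp, hab, ← hw0def]
          linarith [hmul']
      -- assemble: hG (n+1) f = (· ^ f 0) ∘ φ
      have hrepr : ∀ z, hG (n + 1) f z = (φ z) ^ (f 0) := fun z => rfl
      refine ⟨domain_convex (n + 1), fun x hx y hy a b ha hb hab => ?_⟩
      have hwS : a • x + b • y ∈ S := domain_convex (n + 1) hx hy ha hb hab
      have h1 : φ (a • x + b • y) ^ (f 0) ≤ (a * φ x + b * φ y) ^ (f 0) :=
        pow_le_pow_left₀ (hφmem _ hwS).1 (hφconv x hx y hy a b ha hb hab) _
      have h2 : (a * φ x + b * φ y) ^ (f 0) ≤ a * (φ x) ^ (f 0) + b * (φ y) ^ (f 0) := by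
        have := (convexOn_pow (f 0)).2 (Set.mem_Ici.mpr (hφmem x hx).1)
          (Set.mem_Ici.mpr (hφmem y hy).1) ha hb hab
        simpa [smul_eq_mul] using this
      simp only [smul_eq_mul, hrepr]
      exact h1.trans h2

/-- For a spherically symmetric tree the non-percolation function `h_Γ` is convex on
the domain `1 ≥ z₁ ≥ ⋯ ≥ z_n ≥ 0`. -/
theorem stmt_15 (n : ℕ) (hn : 1 ≤ n) (f : ℕ → ℕ) (hf : ∀ k, 1 ≤ f k) :
    ConvexOn ℝ
      {z : ℕ → ℝ | z 0 ≤ 1 ∧ (∀ k, k < n → 0 ≤ z k) ∧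
        ∀ k, k + 1 < n → z (k + 1) ≤ z k}
      (hG n f) := by
  have hset : {z : ℕ → ℝ | z 0 ≤ 1 ∧ (∀ k, k < n → 0 ≤ z k) ∧
      ∀ k, k + 1 < n → z (k + 1) ≤ z k} =
      {z : ℕ → ℝ | (0 < n → z 0 ≤ 1) ∧ (∀ k, k < n → 0 ≤ z k) ∧
      ∀ k, k + 1 < n → z (k + 1) ≤ z k} := by
    ext z
    simp only [Set.mem_setOf_eq]
    constructor
    · rintro ⟨h1, h2, h3⟩; exact ⟨fun _ => h1, h2, h3⟩
    · rintro ⟨h1, h2, h3⟩; exact ⟨h1 (by omega), h2, h3⟩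
  rw [hset]
  exact hG_convexOn n f hf
end
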